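/- Let X be a uniformly rotund Banach space with modulus δ_X and generalized inverse δ_X^{-1}(t) = sup{ε > 0 : δ_X(ε) ≤ t}. Let U ⊆ X be open, ξ a gauge with ξ(r) ≤ δ_X(1/32), C compact connected and (ξ,r₀) almost minimizing in U, x ∈ C, 0 < r < r₀, B(x,r) ⊆ U. Suppose C ∩ B(x,r) is a Lipschitz curve with endpoints x₀, x₁ and C ∩ ∂B(x,r) = {x₀,x₁}, and let L = span{x₁−x₀}. Then for every z ∈ C ∩ B(x,r), dist(z, x + L) ≤ 16 r · δ_X^{-1}(ξ(r)). -/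

import Mathlib

open MeasureTheory

/-- A gauge: a nondecreasing function on `(0,∞)`, nonnegative, tending to `0` at `0⁺`. -/
def IsGauge (ξ : ℝ → ℝ) : Prop :=
  MonotoneOn ξ (Set.Ioi 0) ∧ (∀ r : ℝ, 0 < r → 0 ≤ ξ r) ∧
    Filter.Tendsto ξ (nhdsWithin 0 (Set.Ioi 0)) (nhds 0)

/-- `C` is a compact connected set of finite length, `(ξ, r₀)` almost minimizing in `U`. -/
def AlmostMinimizing {X : Type*} [NormedAddCommGroup X] [NormedSpace ℝ X]
    [MeasurableSpace X] [BorelSpace X]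
    (ξ : ℝ → ℝ) (r₀ : ℝ) (U : Set X) (C : Set X) : Prop :=
  IsCompact C ∧ IsConnected C ∧ μH[1] C < ⊤ ∧
    ∀ x ∈ C ∩ U, ∀ r : ℝ, 0 < r → r ≤ r₀ → Metric.closedBall x r ⊆ U →
      ∀ C' : Set X, IsCompact C' → IsConnected C' →
        C' \ Metric.closedBall x r = C \ Metric.closedBall x r →
        μH[1] (C ∩ Metric.closedBall x r) ≤
          ENNReal.ofReal (1 + ξ r) * μH[1] (C' ∩ Metric.closedBall x r)

private lemma conn_length_lb {X : Type*} [NormedAddCommGroup X] [NormedSpace ℝ X]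
    [MeasurableSpace X] [BorelSpace X] {S : Set X} (hS : IsPreconnected S)
    {a b : X} (ha : a ∈ S) (hb : b ∈ S) :
    ENNReal.ofReal (dist a b) ≤ μH[1] S := by
  have hf : LipschitzWith 1 (dist a) := LipschitzWith.dist_right a
  have hconn : IsPreconnected (dist a '' S) := hS.image _ hf.continuous.continuousOn
  have him : Set.Icc (0:ℝ) (dist a b) ⊆ dist a '' S :=
    hconn.Icc_subset ⟨a, ha, by simp⟩ ⟨b, hb, rfl⟩
  calc ENNReal.ofReal (dist a b) = volume (Set.Icc (0:ℝ) (dist a b)) := by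
        rw [Real.volume_Icc, sub_zero]
    _ = μH[1] (Set.Icc (0:ℝ) (dist a b)) := by rw [MeasureTheory.hausdorffMeasure_real]
    _ ≤ μH[1] (dist a '' S) := measure_mono him
    _ ≤ (1:NNReal)^(1:ℝ) * μH[1] S := hf.hausdorffMeasure_image_le zero_le_one S
    _ = μH[1] S := by simp

private lemma uc_helper {X : Type*} [NormedAddCommGroup X] [NormedSpace ℝ X]
    (δX : ℝ → ℝ) (η δ : ℝ)
    (hkey : ∀ a b : X, ‖a‖ ≤ 1 → ‖b‖ ≤ 1 → δX ‖a - b‖ ≤ 1 - ‖a + b‖ / 2)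
    (hconv : ∀ ε : ℝ, 0 ≤ ε → ε ≤ 2 → δX ε ≤ η → ε ≤ δ)
    (hη0 : 0 ≤ η) (p q : X) (hqp : ‖q‖ ≤ ‖p‖) (hD : 0 < ‖p + q‖)
    (hsum : ‖p‖ + ‖q‖ ≤ (1 + η) * ‖p + q‖) :
    ‖p - (‖p‖ / ‖p + q‖) • (p + q)‖ ≤ ‖p‖ * δ := by
  set w := p + q with hw
  set α := ‖p‖ with hα'
  set β := ‖q‖ with hβ'
  set D := ‖w‖ with hD'
  have hDle : D ≤ α + β := norm_add_le p q
  have hα : 0 < α := by linarith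
  set a := α⁻¹ • p with ha'
  set c := D⁻¹ • w with hc'
  have ha1 : ‖a‖ = 1 := by
    rw [ha', norm_smul, Real.norm_eq_abs, abs_inv, abs_of_pos hα, ← hα', inv_mul_cancel₀ hα.ne']
  have hc1 : ‖c‖ = 1 := by
    rw [hc', norm_smul, Real.norm_eq_abs, abs_inv, abs_of_pos hD, ← hD', inv_mul_cancel₀ hD.ne']
  have hid : (α * D) • (a + c) = D • p + α • w := by
    rw [ha', hc', smul_add, smul_smul, smul_smul]
    congr 1
    · congr 1; field_simp
    · congr 1; field_simp
  have hid2 : D • p + α • w = (D + α) • w - D • q := by rw [hw]; module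
  have hNlb : D * (D + α - β) ≤ ‖D • p + α • w‖ := by
    rw [hid2]
    have h := norm_sub_norm_le ((D + α) • w) (D • q)
    rw [norm_smul, norm_smul, Real.norm_eq_abs, Real.norm_eq_abs,
      abs_of_nonneg (by linarith : (0:ℝ) ≤ D + α), abs_of_nonneg hD.le] at h
    nlinarith
  have hacnorm : (D + α - β) / α ≤ ‖a + c‖ := by
    have h1 : ‖(α * D) • (a + c)‖ = α * D * ‖a + c‖ := by
      rw [norm_smul, Real.norm_eq_abs, abs_of_pos (mul_pos hα hD)]
    have h2 : D * (D + α - β) ≤ α * D * ‖a + c‖ := by rw [← h1, hid]; exact hNlb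
    rw [div_le_iff₀ hα]
    nlinarith
  have hδXac : δX ‖a - c‖ ≤ η := by
    have h := hkey a c ha1.le hc1.le
    have k1 : α + β - D ≤ 2 * η * α := by
      nlinarith [mul_le_mul_of_nonneg_left hDle hη0,
        mul_le_mul_of_nonneg_left (by linarith : α + β ≤ 2 * α) hη0]
    have k2 : 2 - 2 * η ≤ (D + α - β) / α := by
      rw [le_div_iff₀ hα]; nlinarith
    have h3 : 1 - ‖a + c‖ / 2 ≤ η := by linarith
    linarith
  have h2' : ‖a - c‖ ≤ 2 := by
    have := norm_sub_le a c; rw [ha1, hc1] at this; linarith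
  have hfin : ‖a - c‖ ≤ δ := hconv _ (norm_nonneg _) h2' hδXac
  have hrepr : p - (α / D) • w = α • (a - c) := by
    rw [ha', hc', smul_sub, smul_smul, smul_smul, mul_inv_cancel₀ hα.ne', one_smul,
      div_eq_mul_inv]
  calc ‖p - (α / D) • w‖ = α * ‖a - c‖ := by
        rw [hrepr, norm_smul, Real.norm_eq_abs, abs_of_pos hα]
    _ ≤ α * δ := mul_le_mul_of_nonneg_left hfin hα.le

set_option maxHeartbeats 1000000 in
theorem stmt_14 {X : Type*} [NormedAddCommGroup X] [NormedSpace ℝ X]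
    [MeasurableSpace X] [BorelSpace X]
    (δX : ℝ → ℝ)
    (hδX : ∀ ε : ℝ, δX ε =
      sInf {d : ℝ | ∃ x y : X, ‖x‖ ≤ 1 ∧ ‖y‖ ≤ 1 ∧ ε ≤ ‖x - y‖ ∧ d = 1 - ‖x + y‖ / 2})
    (hUR : ∀ ε : ℝ, 0 < ε → ε ≤ 2 → 0 < δX ε)
    (δXinv : ℝ → ℝ)
    (hδXinv : ∀ t : ℝ, δXinv t = sSup {ε : ℝ | 0 < ε ∧ ε ≤ 2 ∧ δX ε ≤ t})
    (U : Set X) (hU : IsOpen U) (ξ : ℝ → ℝ) (hξ : IsGauge ξ)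
    (r₀ : ℝ) (C : Set X) (hC : AlmostMinimizing ξ r₀ U C)
    (x : X) (hx : x ∈ C) (r : ℝ) (hr : 0 < r) (hrr₀ : r < r₀)
    (hB : Metric.closedBall x r ⊆ U)
    (hξδ : ξ r ≤ δX (1 / 32))
    (x₀ x₁ : X) (γ : ℝ → X) (K : NNReal)
    (hlip : LipschitzOnWith K γ (Set.Icc 0 1)) (hinj : Set.InjOn γ (Set.Icc 0 1))
    (hγ0 : γ 0 = x₀) (hγ1 : γ 1 = x₁)
    (himg : C ∩ Metric.closedBall x r = γ '' Set.Icc 0 1)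
    (hsph : C ∩ Metric.sphere x r = {x₀, x₁}) :
    ∀ z ∈ C ∩ Metric.closedBall x r,
      Metric.infDist z (Set.range fun s : ℝ => x + s • (x₁ - x₀)) ≤
        16 * r * δXinv (ξ r) := by
  classical
  intro z hz
  set η := ξ r with hηdef
  have hη0 : 0 ≤ η := hξ.2.1 r hr
  have hγc : ContinuousOn γ (Set.Icc 0 1) := hlip.continuousOn
  have hx₀ : x₀ ∈ C ∩ Metric.sphere x r := by rw [hsph]; exact Set.mem_insert _ _
  have hx₁ : x₁ ∈ C ∩ Metric.sphere x r := by
    rw [hsph]; exact Set.mem_insert_iff.mpr (Or.inr rfl)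
  have hdx₀ : dist x₀ x = r := hx₀.2
  have hdx₁ : dist x₁ x = r := hx₁.2
  set D := dist x₀ x₁ with hDdef
  have hD2r : D ≤ 2 * r := by
    have h := dist_triangle x₀ x x₁
    have h2 : dist x x₁ = r := by rw [dist_comm]; exact hdx₁
    rw [hDdef]; linarith
  -- upper bound via the segment competitor
  have hupper : μH[1] (C ∩ Metric.closedBall x r) ≤ ENNReal.ofReal ((1 + η) * D) := by
    haveI : CompactSpace (Set.Icc (0:ℝ) 1) := isCompact_iff_compactSpace.mp isCompact_Icc
    set E : (Set.Icc (0:ℝ) 1) ≃ (γ '' Set.Icc 0 1) := Equiv.Set.imageOfInjOn γ _ hinj with hE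
    have hEc : Continuous (E : (Set.Icc (0:ℝ) 1) → (γ '' Set.Icc 0 1)) := by
      exact Continuous.subtype_mk hγc.restrict _
    set H := Continuous.homeoOfEquivCompactToT2 (f := E) hEc with hH
    set τ : X → ℝ := fun y =>
      if h : y ∈ γ '' Set.Icc 0 1 then (H.symm ⟨y, h⟩ : ℝ) else 0 with hτdef
    have hτγ : ∀ t ∈ Set.Icc (0:ℝ) 1, τ (γ t) = t := by
      intro t ht
      have hmem : γ t ∈ γ '' Set.Icc 0 1 := Set.mem_image_of_mem γ ht
      have hsymm : H.symm ⟨γ t, hmem⟩ = ⟨t, ht⟩ := by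
        apply H.injective
        rw [Homeomorph.apply_symm_apply]
        exact Subtype.ext rfl
      rw [hτdef]
      simp only [hmem, dif_pos]
      rw [hsymm]
    have hτcont : ContinuousOn τ (γ '' Set.Icc 0 1) := by
      rw [continuousOn_iff_continuous_restrict]
      have hres : Set.domRestrict (γ '' Set.Icc 0 1) τ = fun y => (H.symm y : ℝ) := by
        funext y
        simp only [Set.domRestrict_apply, hτdef, y.2, dif_pos, Subtype.coe_eta]
      rw [hres]
      exact continuous_subtype_val.comp H.symm.continuous
    set F : X → X :=
      fun y => if y ∈ Metric.closedBall x r then x₀ + τ y • (x₁ - x₀) else y with hF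
    have hFC : ContinuousOn F C := by
      apply ContinuousOn.if
      · intro a ha
        have hfr : frontier {a : X | a ∈ Metric.closedBall x r} = Metric.sphere x r := by
          exact frontier_closedBall x hr.ne'
        rw [hfr] at ha
        have hmem : a ∈ ({x₀, x₁} : Set X) := hsph ▸ ha
        rcases hmem with h | h
        · rw [h, ← hγ0, hτγ 0 ⟨le_refl 0, zero_le_one⟩]
          simp
        · rw [Set.mem_singleton_iff] at h
          rw [h, ← hγ1, hτγ 1 ⟨zero_le_one, le_refl 1⟩]
          simp
      · have hcl : C ∩ closure {a : X | a ∈ Metric.closedBall x r} = γ '' Set.Icc 0 1 := by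
          rw [show {a : X | a ∈ Metric.closedBall x r} = Metric.closedBall x r from rfl,
            Metric.isClosed_closedBall.closure_eq, himg]
        rw [hcl]
        exact continuousOn_const.add (hτcont.smul continuousOn_const)
      · exact continuousOn_id.mono Set.inter_subset_left
    have hseg : segment ℝ x₀ x₁ = (fun t : ℝ => x₀ + t • (x₁ - x₀)) '' Set.Icc 0 1 :=
      segment_eq_image' ℝ x₀ x₁
    have himF : F '' C = (C \ Metric.closedBall x r) ∪ segment ℝ x₀ x₁ := by
      apply Set.Subset.antisymm
      · rintro _ ⟨y, hy, rfl⟩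
        by_cases hyB : y ∈ Metric.closedBall x r
        · right
          have hyK : y ∈ γ '' Set.Icc 0 1 := by rw [← himg]; exact ⟨hy, hyB⟩
          obtain ⟨t, ht, rfl⟩ := hyK
          rw [hF]
          simp only [hyB, if_pos]
          rw [hτγ t ht, hseg]
          exact ⟨t, ht, rfl⟩
        · left
          rw [hF]
          simp only [hyB, if_neg, not_false_iff]
          exact ⟨hy, hyB⟩
      · rintro y (⟨hyC, hyB⟩ | hyseg)
        · exact ⟨y, hyC, by rw [hF]; simp [hyB]⟩
        · rw [hseg] at hyseg
          obtain ⟨t, ht, rfl⟩ := hyseg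
          have h2 : γ t ∈ C ∩ Metric.closedBall x r := by
            rw [himg]; exact Set.mem_image_of_mem _ ht
          refine ⟨γ t, h2.1, ?_⟩
          rw [hF]
          simp only [h2.2, if_pos]
          rw [hτγ t ht]
    have hx₀B : x₀ ∈ Metric.closedBall x r := Metric.mem_closedBall.mpr hdx₀.le
    have hx₁B : x₁ ∈ Metric.closedBall x r := Metric.mem_closedBall.mpr hdx₁.le
    have hseg_sub : segment ℝ x₀ x₁ ⊆ Metric.closedBall x r :=
      (convex_closedBall x r).segment_subset hx₀B hx₁B
    have hC'comp : IsCompact (F '' C) := hC.1.image_of_continuousOn hFC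
    have hC'conn : IsConnected (F '' C) := hC.2.1.image F hFC
    have hdiffeq : F '' C \ Metric.closedBall x r = C \ Metric.closedBall x r := by
      rw [himF]
      ext y
      simp only [Set.mem_diff, Set.mem_union]
      constructor
      · rintro ⟨h1 | h1, h2⟩
        · exact ⟨h1.1, h2⟩
        · exact absurd (hseg_sub h1) h2
      · rintro ⟨h1, h2⟩
        exact ⟨Or.inl ⟨h1, h2⟩, h2⟩
    have hcap : F '' C ∩ Metric.closedBall x r = segment ℝ x₀ x₁ := by
      rw [himF]
      ext y
      simp only [Set.mem_inter_iff, Set.mem_union, Set.mem_diff]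
      constructor
      · rintro ⟨h1 | h1, h2⟩
        · exact absurd h2 h1.2
        · exact h1
      · intro h
        exact ⟨Or.inr h, hseg_sub h⟩
    have hmin := hC.2.2.2 x ⟨hx, hB (Metric.mem_closedBall_self hr.le)⟩ r hr hrr₀.le hB
      (F '' C) hC'comp hC'conn hdiffeq
    rw [hcap] at hmin
    calc μH[1] (C ∩ Metric.closedBall x r)
        ≤ ENNReal.ofReal (1 + ξ r) * μH[1] (segment ℝ x₀ x₁) := hmin
      _ = ENNReal.ofReal (1 + η) * ENNReal.ofReal D := by
          rw [hausdorffMeasure_segment, edist_dist, hηdef, hDdef]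
      _ = ENNReal.ofReal ((1 + η) * D) := (ENNReal.ofReal_mul (by linarith)).symm
  -- length lower bound for points on the curve
  have hkeylen : ∀ z' ∈ C ∩ Metric.closedBall x r,
      dist x₀ z' + dist z' x₁ ≤ (1 + η) * D := by
    intro z' hz'
    have hz2 : z' ∈ γ '' Set.Icc 0 1 := by rw [← himg]; exact hz'
    obtain ⟨t, ht, rfl⟩ := hz2
    set A := γ '' Set.Icc 0 t with hA
    set B := γ '' Set.Icc t 1 with hBdef
    have hsubA : Set.Icc (0:ℝ) t ⊆ Set.Icc 0 1 := Set.Icc_subset_Icc le_rfl ht.2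
    have hsubB : Set.Icc t 1 ⊆ Set.Icc 0 1 := Set.Icc_subset_Icc ht.1 le_rfl
    have hAconn : IsPreconnected A := isPreconnected_Icc.image _ (hγc.mono hsubA)
    have hBconn : IsPreconnected B := isPreconnected_Icc.image _ (hγc.mono hsubB)
    have hBcomp : IsCompact B := isCompact_Icc.image_of_continuousOn (hγc.mono hsubB)
    have hlbA : ENNReal.ofReal (dist x₀ (γ t)) ≤ μH[1] A :=
      conn_length_lb hAconn ⟨0, ⟨le_refl 0, ht.1⟩, hγ0⟩ ⟨t, ⟨ht.1, le_rfl⟩, rfl⟩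
    have hlbB : ENNReal.ofReal (dist (γ t) x₁) ≤ μH[1] B :=
      conn_length_lb hBconn ⟨t, ⟨le_rfl, ht.2⟩, rfl⟩ ⟨1, ⟨ht.2, le_rfl⟩, hγ1⟩
    have hunion : A ∪ B = γ '' Set.Icc 0 1 := by
      rw [hA, hBdef, ← Set.image_union, Set.Icc_union_Icc_eq_Icc ht.1 ht.2]
    have hinter : A ∩ B = {γ t} := by
      rw [hA, hBdef, ← hinj.image_inter hsubA hsubB, Set.Icc_inter_Icc,
        max_eq_right ht.1, min_eq_left ht.2, Set.Icc_self, Set.image_singleton]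
    have hsing : μH[1] ({γ t} : Set X) = 0 := by
      rw [← segment_same ℝ, hausdorffMeasure_segment]
      exact edist_self _
    have hadd : μH[1] (A ∪ B) = μH[1] A + μH[1] B := by
      have h := measure_union_add_inter (μ := μH[1]) A hBcomp.isClosed.measurableSet
      rw [hinter, hsing, add_zero] at h
      exact h
    have hfinal : ENNReal.ofReal (dist x₀ (γ t)) + ENNReal.ofReal (dist (γ t) x₁)
        ≤ ENNReal.ofReal ((1 + η) * D) := by
      calc ENNReal.ofReal (dist x₀ (γ t)) + ENNReal.ofReal (dist (γ t) x₁)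
          ≤ μH[1] A + μH[1] B := add_le_add hlbA hlbB
        _ = μH[1] (A ∪ B) := hadd.symm
        _ = μH[1] (C ∩ Metric.closedBall x r) := by rw [hunion, himg]
        _ ≤ ENNReal.ofReal ((1 + η) * D) := hupper
    rw [← ENNReal.ofReal_add dist_nonneg dist_nonneg] at hfinal
    exact (ENNReal.ofReal_le_ofReal_iff (mul_nonneg (by linarith) dist_nonneg)).mp hfinal
  have h2r : 2 * r ≤ (1 + η) * D := by
    have h := hkeylen x ⟨hx, Metric.mem_closedBall_self hr.le⟩
    have h1 : dist x₀ x = r := hdx₀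
    have h2 : dist x x₁ = r := by rw [dist_comm]; exact hdx₁
    linarith
  have hDpos : 0 < D := by nlinarith
  have hwD : ‖x₁ - x₀‖ = D := by rw [hDdef, dist_eq_norm, norm_sub_rev]
  -- the modulus-of-convexity machinery
  set δ := δXinv η with hδdef
  have hkey : ∀ a b : X, ‖a‖ ≤ 1 → ‖b‖ ≤ 1 → δX ‖a - b‖ ≤ 1 - ‖a + b‖ / 2 := by
    intro a b ha hb
    rw [hδX]
    apply csInf_le
    · refine ⟨0, ?_⟩
      rintro d ⟨p, q, hp, hq, -, rfl⟩
      have := norm_add_le p q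
      linarith
    · exact ⟨a, b, ha, hb, le_rfl, rfl⟩
  have hδnn : 0 ≤ δ := by
    rw [hδdef, hδXinv]
    exact Real.sSup_nonneg (fun ε hε => hε.1.le)
  have hconv : ∀ ε : ℝ, 0 ≤ ε → ε ≤ 2 → δX ε ≤ η → ε ≤ δ := by
    intro ε h0 h2 hδε
    rcases eq_or_lt_of_le h0 with h | h
    · rw [← h]; exact hδnn
    · rw [hδdef, hδXinv]
      exact le_csSup ⟨2, fun e he => he.2.1⟩ ⟨h, h2, hδε⟩
  -- Step 1: midpoint of x₀,x₁ is close to x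
  have hmid : ‖(x₀ - x) + (x₁ - x)‖ ≤ r * δ := by
    set u := r⁻¹ • (x₀ - x) with hu
    set v := r⁻¹ • (x₁ - x) with hv
    have hn₀ : ‖x₀ - x‖ = r := by rw [← dist_eq_norm]; exact hdx₀
    have hn₁ : ‖x₁ - x‖ = r := by rw [← dist_eq_norm]; exact hdx₁
    have hnu : ‖u‖ = 1 := by
      rw [hu, norm_smul, Real.norm_eq_abs, abs_inv, abs_of_pos hr, hn₀,
        inv_mul_cancel₀ hr.ne']
    have hnv : ‖v‖ = 1 := by
      rw [hv, norm_smul, Real.norm_eq_abs, abs_inv, abs_of_pos hr, hn₁,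
        inv_mul_cancel₀ hr.ne']
    have huv : ‖u - v‖ = D / r := by
      rw [hu, hv, ← smul_sub, norm_smul, Real.norm_eq_abs, abs_inv, abs_of_pos hr]
      have heq : ‖x₀ - x - (x₁ - x)‖ = D := by
        rw [show x₀ - x - (x₁ - x) = x₀ - x₁ by abel, ← dist_eq_norm, hDdef]
      rw [heq, inv_mul_eq_div]
    have hkey1 := hkey u (-v) hnu.le (by rw [norm_neg]; exact hnv.le)
    rw [sub_neg_eq_add, ← sub_eq_add_neg] at hkey1
    have hδXuv : δX ‖u + v‖ ≤ η := by
      rw [huv] at hkey1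
      have heq : 1 - D / r / 2 = (2 * r - D) / (2 * r) := by
        field_simp
      have hle : (2 * r - D) / (2 * r) ≤ η := by
        rw [div_le_iff₀ (by linarith)]
        nlinarith
      linarith [hkey1, heq ▸ hle]
    have h2' : ‖u + v‖ ≤ 2 := by
      have := norm_add_le u v; rw [hnu, hnv] at this; linarith
    have hc := hconv _ (norm_nonneg _) h2' hδXuv
    have hsumuv : ‖u + v‖ = r⁻¹ * ‖(x₀ - x) + (x₁ - x)‖ := by
      rw [hu, hv, ← smul_add, norm_smul, Real.norm_eq_abs, abs_inv, abs_of_pos hr]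
    rw [hsumuv] at hc
    calc ‖(x₀ - x) + (x₁ - x)‖ = r * (r⁻¹ * ‖(x₀ - x) + (x₁ - x)‖) := by
          field_simp
      _ ≤ r * δ := mul_le_mul_of_nonneg_left hc hr.le
  -- Step 2: z is close to the chord
  have hdistz := hkeylen z hz
  have hzx : dist z x ≤ r := Metric.mem_closedBall.mp hz.2
  have hz0 : ‖z - x₀‖ ≤ 2 * r := by
    rw [← dist_eq_norm]
    have h := dist_triangle z x x₀
    have h2 : dist x x₀ = r := by rw [dist_comm]; exact hdx₀
    linarith
  have hz1 : ‖x₁ - z‖ ≤ 2 * r := by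
    rw [← dist_eq_norm]
    have h := dist_triangle x₁ x z
    have h2 : dist z x = dist x z := dist_comm z x
    linarith [hdx₁, dist_triangle x₁ x z]
  have hpq : (z - x₀) + (x₁ - z) = x₁ - x₀ := by abel
  have hqp' : (x₁ - z) + (z - x₀) = x₁ - x₀ := by abel
  have hd1 : dist x₀ z = ‖z - x₀‖ := by rw [dist_comm, dist_eq_norm]
  have hd2 : dist z x₁ = ‖x₁ - z‖ := by rw [dist_comm, dist_eq_norm]
  rcases le_total ‖x₁ - z‖ ‖z - x₀‖ with hcase | hcase
  · -- ‖q‖ ≤ ‖p‖ with p = z - x₀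
    have hD0 : 0 < ‖(z - x₀) + (x₁ - z)‖ := by rw [hpq, hwD]; exact hDpos
    have hsum' : ‖z - x₀‖ + ‖x₁ - z‖ ≤ (1 + η) * ‖(z - x₀) + (x₁ - z)‖ := by
      rw [hpq, hwD]
      rw [hd1, hd2] at hdistz
      linarith
    have hH := uc_helper δX η δ hkey hconv hη0 (z - x₀) (x₁ - z) hcase hD0 hsum'
    rw [hpq] at hH
    -- hH : ‖(z - x₀) - (‖z - x₀‖ / ‖x₁ - x₀‖) • (x₁ - x₀)‖ ≤ ‖z - x₀‖ * δ
    have hmem : (x + (‖z - x₀‖ / ‖x₁ - x₀‖ - 1 / 2) • (x₁ - x₀)) ∈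
        Set.range fun s : ℝ => x + s • (x₁ - x₀) := ⟨_, rfl⟩
    refine le_trans (Metric.infDist_le_dist_of_mem hmem) ?_
    rw [dist_eq_norm]
    have hdecomp : z - (x + (‖z - x₀‖ / ‖x₁ - x₀‖ - 1 / 2) • (x₁ - x₀)) =
        ((z - x₀) - (‖z - x₀‖ / ‖x₁ - x₀‖) • (x₁ - x₀)) +
          (1 / 2 : ℝ) • ((x₀ - x) + (x₁ - x)) := by
      module
    rw [hdecomp]
    have h1 := norm_add_le ((z - x₀) - (‖z - x₀‖ / ‖x₁ - x₀‖) • (x₁ - x₀))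
      ((1 / 2 : ℝ) • ((x₀ - x) + (x₁ - x)))
    have h2 : ‖(1 / 2 : ℝ) • ((x₀ - x) + (x₁ - x))‖ ≤ (1 / 2) * (r * δ) := by
      rw [norm_smul, Real.norm_eq_abs]
      have : |(1 / 2 : ℝ)| = 1 / 2 := by norm_num
      rw [this]
      linarith [hmid]
    have h3 : ‖z - x₀‖ * δ ≤ 2 * r * δ := mul_le_mul_of_nonneg_right hz0 hδnn
    have hrδ : 0 ≤ r * δ := mul_nonneg hr.le hδnn
    nlinarith [hH]
  · -- ‖p‖ ≤ ‖q‖ with q = x₁ - z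
    have hD0 : 0 < ‖(x₁ - z) + (z - x₀)‖ := by rw [hqp', hwD]; exact hDpos
    have hsum' : ‖x₁ - z‖ + ‖z - x₀‖ ≤ (1 + η) * ‖(x₁ - z) + (z - x₀)‖ := by
      rw [hqp', hwD]
      rw [hd1, hd2] at hdistz
      linarith
    have hH := uc_helper δX η δ hkey hconv hη0 (x₁ - z) (z - x₀) hcase hD0 hsum'
    rw [hqp'] at hH
    -- hH : ‖(x₁ - z) - (‖x₁ - z‖ / ‖x₁ - x₀‖) • (x₁ - x₀)‖ ≤ ‖x₁ - z‖ * δ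
    have hmem : (x + (1 / 2 - ‖x₁ - z‖ / ‖x₁ - x₀‖) • (x₁ - x₀)) ∈
        Set.range fun s : ℝ => x + s • (x₁ - x₀) := ⟨_, rfl⟩
    refine le_trans (Metric.infDist_le_dist_of_mem hmem) ?_
    rw [dist_eq_norm]
    have hdecomp : z - (x + (1 / 2 - ‖x₁ - z‖ / ‖x₁ - x₀‖) • (x₁ - x₀)) =
        -((x₁ - z) - (‖x₁ - z‖ / ‖x₁ - x₀‖) • (x₁ - x₀)) +
          (1 / 2 : ℝ) • ((x₀ - x) + (x₁ - x)) := by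
      module
    rw [hdecomp]
    have h1 := norm_add_le (-((x₁ - z) - (‖x₁ - z‖ / ‖x₁ - x₀‖) • (x₁ - x₀)))
      ((1 / 2 : ℝ) • ((x₀ - x) + (x₁ - x)))
    rw [norm_neg] at h1
    have h2 : ‖(1 / 2 : ℝ) • ((x₀ - x) + (x₁ - x))‖ ≤ (1 / 2) * (r * δ) := by
      rw [norm_smul, Real.norm_eq_abs]
      have : |(1 / 2 : ℝ)| = 1 / 2 := by norm_num
      rw [this]
      linarith [hmid]
    have h3 : ‖x₁ - z‖ * δ ≤ 2 * r * δ := mul_le_mul_of_nonneg_right hz1 hδnn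
    have hrδ : 0 ≤ r * δ := mul_nonneg hr.le hδnn
    nlinarith [hH]
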